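/- For all nonnegative integers m, n, real α ∈ ℝ, and complex b ≠ 0, q ≠ 0, z₁, z₂: p_{m,n}(z₁, z₂; b | 1/q) = (-1)^{m+n} (b/q)^{(1-α)m + αn} q^{-(m+n)(m+n-1)/2} p_{m,n}((b/q)^α z₁, (b/q)^{1-α} z₂; 1/b | q). -/

import Mathlib

open Finset Filter

noncomputable def qPoch (a q : ℂ) (n : ℕ) : ℂ :=
  ∏ j ∈ Finset.range n, (1 - a * q ^ j)

noncomputable def qbinom (q : ℂ) : ℕ → ℕ → ℂ
  | _, 0 => 1
  | 0, _ + 1 => 0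
  | m + 1, k + 1 => qbinom q m k + q ^ (k + 1) * qbinom q m (k + 1)

/-- The first q-analogue of the 2D Hermite polynomials. -/
noncomputable def H2D (q z1 z2 : ℂ) (m n : ℕ) : ℂ :=
  ∑ k ∈ Finset.range (min m n + 1),
    qbinom q m k * qbinom q n k * (-1) ^ k * q ^ (k.choose 2) * qPoch q q k *
      z1 ^ (m - k) * z2 ^ (n - k)

/-- The second q-analogue of the 2D Hermite polynomials. -/
noncomputable def h2D (q z1 z2 : ℂ) (m n : ℕ) : ℂ :=
  ∑ j ∈ Finset.range (min m n + 1),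
    qbinom q m j * qbinom q n j * q ^ ((m - j) * (n - j)) * (-1) ^ j * qPoch q q j *
      z1 ^ (m - j) * z2 ^ (n - j)

/-- The q-2D ultraspherical (q-disk / q-Zernike) polynomials. -/
noncomputable def p2D (q b z1 z2 : ℂ) (m n : ℕ) : ℂ :=
  ∑ k ∈ Finset.range (min m n + 1),
    qbinom q m k * qbinom q n k * (-1) ^ k * q ^ (k.choose 2) * qPoch q q k *
      qPoch (b * q) q (m + n - k) * z1 ^ (m - k) * z2 ^ (n - k)

/-- The infinite q-Pochhammer product (a;q)_∞. -/
noncomputable def qPochInf (a q : ℂ) : ℂ :=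
  ∏' j : ℕ, (1 - a * q ^ j)

/- ### Auxiliary lemmas -/

lemma qbinom_eq_zero (q : ℂ) : ∀ m k, m < k → qbinom q m k = 0
  | _, 0, h => absurd h (by omega)
  | 0, k + 1, _ => rfl
  | m + 1, k + 1, h => by
    rw [qbinom, qbinom_eq_zero q m k (by omega), qbinom_eq_zero q m (k+1) (by omega)]
    ring

lemma qbinom_pascal2 (q : ℂ) : ∀ m k, qbinom q (m+1) (k+1) =
    q ^ (m - k) * qbinom q m k + qbinom q m (k+1)
  | 0, k => by
    rcases k with _ | k
    · simp [qbinom]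
    · simp [qbinom, qbinom_eq_zero q 0 (k+1) (by omega)]
  | m + 1, 0 => by
    have h := qbinom_pascal2 q m 0
    conv_lhs => rw [qbinom, h]
    conv_rhs => rw [qbinom]
    simp only [qbinom, Nat.sub_zero]
    ring
  | m + 1, k + 1 => by
    rcases lt_trichotomy k m with h | h | h
    · have h1 := qbinom_pascal2 q m k
      have h2 := qbinom_pascal2 q m (k+1)
      conv_lhs => rw [qbinom, h1, h2]
      conv_rhs => rw [qbinom, qbinom]
      obtain ⟨d, rfl⟩ : ∃ d, m = k + 1 + d := ⟨m - (k+1), by omega⟩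
      rw [show k + 1 + d - (k+1) = d by omega, show k + 1 + d - k = d + 1 by omega,
        show k + 1 + d + 1 - (k+1) = d + 1 by omega]
      ring
    · subst h
      conv_lhs => rw [qbinom]
      rw [qbinom_eq_zero q (k+1) (k+1+1) (by omega)]
      simp
    · rw [qbinom_eq_zero q (m+1+1) (k+1+1) (by omega),
        qbinom_eq_zero q (m+1) (k+1) (by omega), qbinom_eq_zero q (m+1) (k+1+1) (by omega)]
      ring

lemma qbinom_inv (q : ℂ) (hq : q ≠ 0) : ∀ m k,
    qbinom q⁻¹ m k * q ^ (k * m) = qbinom q m k * q ^ (k * k)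
  | 0, 0 => by simp [qbinom]
  | 0, k + 1 => by simp [qbinom]
  | m + 1, 0 => by simp [qbinom]
  | m + 1, k + 1 => by
    have h1 := qbinom_inv q hq m k
    have h2 := qbinom_inv q hq m (k + 1)
    conv_lhs => rw [qbinom]
    rw [qbinom_pascal2 q m k]
    rcases le_or_gt k m with h | h
    · obtain ⟨d, rfl⟩ : ∃ d, m = k + d := ⟨m - k, by omega⟩
      rw [show k + d - k = d by omega]
      rw [inv_pow]
      field_simp
      simp only [one_div]
      linear_combination (q ^ (3*k+d+2)) * h1 + (q ^ (k+1)) * h2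
    · rw [qbinom_eq_zero q m k (by omega), qbinom_eq_zero q m (k+1) (by omega),
        qbinom_eq_zero q⁻¹ m k (by omega), qbinom_eq_zero q⁻¹ m (k+1) (by omega)]
      ring

lemma qbinom_inv' (q : ℂ) (hq : q ≠ 0) (m k : ℕ) :
    qbinom q⁻¹ m k = qbinom q m k * q ^ (k*k) * (q ^ (k*m))⁻¹ := by
  rw [eq_mul_inv_iff_mul_eq₀ (pow_ne_zero _ hq)]
  exact qbinom_inv q hq m k

lemma tri_succ (n : ℕ) : (n+1)*(n+1+1)/2 = n*(n+1)/2 + (n+1) := by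
  rw [show (n+1)*(n+1+1) = n*(n+1) + (n+1)*2 by ring,
    Nat.add_mul_div_right _ _ (by norm_num : (0:ℕ) < 2)]

lemma qPoch_succ (a q : ℂ) (n : ℕ) :
    qPoch a q (n + 1) = qPoch a q n * (1 - a * q ^ n) := Finset.prod_range_succ _ _

lemma qPoch_inv' (a q : ℂ) (ha : a ≠ 0) (hq : q ≠ 0) : ∀ n : ℕ,
    qPoch (a * (1/q)) (1/q) n
      = (-a) ^ n * (q ^ (n*(n+1)/2))⁻¹ * qPoch (1/a * q) q n
  | 0 => by simp [qPoch]
  | n + 1 => by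
    rw [qPoch_succ, qPoch_inv' a q ha hq n, qPoch_succ, tri_succ, pow_add, pow_succ]
    have h1 : (q : ℂ) ^ (n*(n+1)/2) ≠ 0 := pow_ne_zero _ hq
    have h2 : (q : ℂ) ^ n ≠ 0 := pow_ne_zero _ hq
    simp only [one_div, inv_pow]
    field_simp
    ring

lemma qPochA (q : ℂ) (hq : q ≠ 0) (n : ℕ) :
    qPoch q⁻¹ q⁻¹ n = (-1)^n * (q ^ (n*(n+1)/2))⁻¹ * qPoch q q n := by
  simpa using qPoch_inv' 1 q one_ne_zero hq n

lemma qPochB (b q : ℂ) (hb : b ≠ 0) (hq : q ≠ 0) (n : ℕ) :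
    qPoch (b * q⁻¹) q⁻¹ n
      = (-1)^n * b^n * (q ^ (n*(n+1)/2))⁻¹ * qPoch (b⁻¹ * q) q n := by
  have h := qPoch_inv' b q hb hq n
  simp only [one_div] at h
  rw [h, neg_pow]

lemma choose_two_nat (s : ℕ) : s.choose 2 * 2 + s = s * s := by
  induction s with
  | zero => simp
  | succ t ih =>
    rw [Nat.choose_succ_succ, Nat.choose_one_right, show Nat.succ 1 = 2 from rfl]
    have h : (t+1) * (t+1) = t*t + 2*t + 1 := by ring
    rw [h]
    omega

lemma tri_nat (s : ℕ) : s*(s+1)/2*2 = s*s + s := by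
  have h : s*(s+1)/2*2 = s*(s+1) :=
    Nat.div_mul_cancel (Nat.even_mul_succ_self s).two_dvd
  rw [h]; ring

lemma key (q : ℂ) (hq : q ≠ 0) (k i j : ℕ) :
    (q ^ (k.choose 2))⁻¹ * (q ^ (k*k) * (q ^ (k*(k+i)))⁻¹) * (q ^ (k*k) * (q ^ (k*(k+j)))⁻¹) *
      (q ^ (k*(k+1)/2))⁻¹ * (q ^ ((k+i+j)*((k+i+j)+1)/2))⁻¹
    = (q ^ ((k+i+(k+j)).choose 2))⁻¹ * q ^ (k.choose 2) * (q ^ (k+i+j))⁻¹ := by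
  obtain ⟨t1, ht1⟩ : ∃ t, t = k*(k+1)/2 := ⟨_, rfl⟩
  obtain ⟨t2, ht2⟩ : ∃ t, t = (k+i+j)*((k+i+j)+1)/2 := ⟨_, rfl⟩
  obtain ⟨c1, hc1⟩ : ∃ c, c = k.choose 2 := ⟨_, rfl⟩
  obtain ⟨c4, hc4⟩ : ∃ c, c = (k+i+(k+j)).choose 2 := ⟨_, rfl⟩
  have r1 : c1*2 + k = k*k := by rw [hc1]; exact choose_two_nat k
  have r2 : t1*2 = k*k + k := by rw [ht1]; exact tri_nat k
  have r3 : t2*2 = (k+i+j)*(k+i+j) + (k+i+j) := by rw [ht2]; exact tri_nat (k+i+j)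
  have r4 : c4*2 + (k+i+(k+j)) = (k+i+(k+j))*(k+i+(k+j)) := by
    rw [hc4]; exact choose_two_nat (k+i+(k+j))
  rw [← ht1, ← ht2, ← hc1, ← hc4]
  have h : ∀ e : ℕ, (q ^ e)⁻¹ = q ^ (-(e : ℤ)) := fun e => by
    rw [zpow_neg, zpow_natCast]
  have h2 : ∀ e : ℕ, (q : ℂ) ^ e = q ^ ((e : ℤ)) := fun e => (zpow_natCast q e).symm
  rw [h, h, h, h, h, h, h, h2 (k*k), h2 c1,
    ← zpow_add₀ hq, ← zpow_add₀ hq, ← zpow_add₀ hq, ← zpow_add₀ hq, ← zpow_add₀ hq,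
    ← zpow_add₀ hq, ← zpow_add₀ hq, ← zpow_add₀ hq]
  congr 1
  have z1 : ((c1:ℤ))*2 + k = (k:ℤ)*k := by exact_mod_cast congrArg (Nat.cast : ℕ → ℤ) r1
  have z2 : ((t1:ℤ))*2 = (k:ℤ)*k + k := by exact_mod_cast congrArg (Nat.cast : ℕ → ℤ) r2
  have z3 : ((t2:ℤ))*2 = ((k:ℤ)+i+j)*((k:ℤ)+i+j) + ((k:ℤ)+i+j) := by
    exact_mod_cast congrArg (Nat.cast : ℕ → ℤ) r3
  have z4 : ((c4:ℤ))*2 + ((k:ℤ)+i+((k:ℤ)+j)) = ((k:ℤ)+i+((k:ℤ)+j))*((k:ℤ)+i+((k:ℤ)+j)) := by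
    exact_mod_cast congrArg (Nat.cast : ℕ → ℤ) r4
  push_cast
  linarith [z1, z2, z3, z4]

theorem stmt18 (m n : ℕ) (α : ℝ) (b q z1 z2 : ℂ) (hb : b ≠ 0) (hq : q ≠ 0) :
    p2D (1 / q) b z1 z2 m n =
      (-1) ^ (m + n) * (b / q) ^ ((((1 - α) * m + α * n : ℝ)) : ℂ) *
        (q ^ ((m + n).choose 2))⁻¹ *
          p2D q (1 / b) ((b / q) ^ ((α : ℝ) : ℂ) * z1) ((b / q) ^ (((1 - α : ℝ)) : ℂ) * z2)
            m n := by
  have hbq : b / q ≠ 0 := div_ne_zero hb hq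
  unfold p2D
  rw [Finset.mul_sum]
  refine Finset.sum_congr rfl fun k hk => ?_
  simp only [Finset.mem_range] at hk
  obtain ⟨i, hm⟩ : ∃ i, m = k + i := ⟨m - k, by omega⟩
  obtain ⟨j, hn⟩ : ∃ j, n = k + j := ⟨n - k, by omega⟩
  subst hm hn
  simp only [one_div]
  rw [show k + i + (k + j) - k = k + i + j by omega,
      show k + i - k = i by omega, show k + j - k = j by omega]
  rw [qbinom_inv' q hq (k+i) k, qbinom_inv' q hq (k+j) k,
      qPochA q hq k, qPochB b q hb hq (k+i+j), inv_pow]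
  rw [mul_pow, mul_pow, ← Complex.cpow_nat_mul, ← Complex.cpow_nat_mul]
  have hmerge : (b / q) ^ ((((1 - α) * ↑(k+i) + α * ↑(k+j) : ℝ)) : ℂ) *
      ((b / q) ^ ((i : ℂ) * ((α : ℝ) : ℂ))) *
      ((b / q) ^ ((j : ℂ) * (((1 - α : ℝ)) : ℂ))) = b ^ (k+i+j) * (q ^ (k+i+j))⁻¹ := by
    rw [← Complex.cpow_add _ _ hbq, ← Complex.cpow_add _ _ hbq,
      show (((1 - α) * ↑(k+i) + α * ↑(k+j) : ℝ) : ℂ) + (i : ℂ) * ((α : ℝ) : ℂ)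
          + (j : ℂ) * (((1 - α : ℝ)) : ℂ) = ((k+i+j : ℕ) : ℂ) by push_cast; ring,
      Complex.cpow_natCast, div_pow, div_eq_mul_inv]
  linear_combination
    (qbinom q (k+i) k * qbinom q (k+j) k * qPoch q q k * qPoch (b⁻¹ * q) q (k+i+j) *
      z1 ^ i * z2 ^ j * (-1)^k * (-1)^k * (-1)^(k+i+j) * b^(k+i+j)) * key q hq k i j
    - ((-1)^(k+i+(k+j)) * (q ^ ((k+i+(k+j)).choose 2))⁻¹ * qbinom q (k+i) k *
        qbinom q (k+j) k * (-1)^k * q ^ (k.choose 2) * qPoch q q k *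
        qPoch (b⁻¹ * q) q (k+i+j) * z1 ^ i * z2 ^ j) * hmerge
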